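/- Let ρ : 𝓧 → ℝ be a convex risk measure on a model space 𝓧. Then ρ is representable, i.e. ρ(x) = sup{E[x y] − ρ^#(y) : y ∈ 𝓧^#} for all x ∈ 𝓧, if and only if ρ(x) = sup{E[x y] − ρ^#(y) : y ∈ 𝓧^#, y ≤ 0 a.s., E[y] = −1} for all x ∈ 𝓧. -/

import Mathlib

open MeasureTheory Filter Topology
open scoped ENNReal Topology

variable {Ω : Type*}

/-- A model space: a solid linear subspace of `L⁰(𝓔)` consisting of integrable
functions and containing the (classes of) constant functions. -/
def IsModelSpace [MeasurableSpace Ω] (P : Measure Ω) (X : Set (Ω → ℝ)) : Prop :=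
  (∀ x ∈ X, Measurable x) ∧
  (∀ x ∈ X, ∀ y ∈ X, x + y ∈ X) ∧
  (∀ c : ℝ, ∀ x ∈ X, (fun ω => c * x ω) ∈ X) ∧
  (∀ x y : Ω → ℝ, Measurable x → y ∈ X → (∀ᵐ ω ∂P, |x ω| ≤ |y ω|) → x ∈ X) ∧
  (∀ x ∈ X, Integrable x P) ∧
  (∀ c : ℝ, (fun _ => c) ∈ X)

/-- The Köthe dual `𝓧^#` of a model space. -/
def kotheDual [MeasurableSpace Ω] (P : Measure Ω) (X : Set (Ω → ℝ)) : Set (Ω → ℝ) :=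
  {y | Measurable y ∧ ∀ x ∈ X, Integrable (fun ω => x ω * y ω) P}

/-- A convex risk measure on a model space `X`. -/
def IsConvexRiskMeasure [MeasurableSpace Ω] (P : Measure Ω) (X : Set (Ω → ℝ))
    (ρ : (Ω → ℝ) → ℝ) : Prop :=
  (∀ x ∈ X, ∀ y ∈ X, ∀ r : ℝ, 0 ≤ r → r ≤ 1 →
    ρ (fun ω => r * x ω + (1 - r) * y ω) ≤ r * ρ x + (1 - r) * ρ y) ∧
  (∀ x ∈ X, ∀ y ∈ X, (∀ᵐ ω ∂P, x ω ≤ y ω) → ρ y ≤ ρ x) ∧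
  (∀ x ∈ X, ∀ r : ℝ, ρ (fun ω => x ω + r) = ρ x - r)

/-- The Fenchel transform `ρ^#(y) = sup {E[x y] - ρ(x) : x ∈ X}`, with values in
the extended reals. -/
noncomputable def fenchel [MeasurableSpace Ω] (P : Measure Ω) (X : Set (Ω → ℝ))
    (ρ : (Ω → ℝ) → ℝ) (y : Ω → ℝ) : EReal :=
  sSup ((fun x => (((∫ ω, x ω * y ω ∂P) - ρ x : ℝ) : EReal)) '' X)

/-- `ρ` is representable over a set `D ⊆ 𝓧^#` of dual variables:
`ρ(x) = sup {E[x y] - ρ^#(y) : y ∈ D}` for all `x ∈ 𝓧`. -/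
def IsRepresentableOver [MeasurableSpace Ω] (P : Measure Ω) (X : Set (Ω → ℝ))
    (ρ : (Ω → ℝ) → ℝ) (D : Set (Ω → ℝ)) : Prop :=
  ∀ x ∈ X, (ρ x : EReal) =
    sSup ((fun y => (((∫ ω, x ω * y ω ∂P : ℝ)) : EReal) - fenchel P X ρ y) '' D)

lemma fenchel_eq_top_of_not_prob [MeasurableSpace Ω]
    (P : Measure Ω) [IsProbabilityMeasure P] (X : Set (Ω → ℝ)) (hX : IsModelSpace P X)
    (ρ : (Ω → ℝ) → ℝ) (hρ : IsConvexRiskMeasure P X ρ) (y : Ω → ℝ)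
    (hy : y ∈ kotheDual P X)
    (hy' : ¬((∀ᵐ ω ∂P, y ω ≤ 0) ∧ ∫ ω, y ω ∂P = -1)) :
    fenchel P X ρ y = ⊤ := by
  obtain ⟨hmeasX, hadd, hsmul, hsolid, hint, hconst⟩ := hX
  obtain ⟨hcvx, hmono, hcash⟩ := hρ
  have h0X : (fun _ : Ω => (0:ℝ)) ∈ X := hconst 0
  rw [fenchel, sSup_eq_top]
  intro b hb
  obtain ⟨r, hbr, -⟩ := EReal.lt_iff_exists_real_btwn.mp hb
  by_cases hneg : ∀ᵐ ω ∂P, y ω ≤ 0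
  · -- then the integral is ≠ -1; use constants
    have hd : (∫ ω, y ω ∂P) + 1 ≠ 0 := by
      intro h
      exact hy' ⟨hneg, by linarith [h]⟩
    set d := (∫ ω, y ω ∂P) + 1 with hd_def
    set c : ℝ := (r + ρ (fun _ => 0) + 1) / d with hc_def
    refine ⟨_, ⟨(fun _ : Ω => c), hconst c, rfl⟩, ?_⟩
    have hρc : ρ (fun _ : Ω => c) = ρ (fun _ => 0) - c := by
      have := hcash (fun _ => 0) h0X c
      simpa using this
    have hintc : ∫ ω, (fun _ : Ω => c) ω * y ω ∂P = c * ∫ ω, y ω ∂P := by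
      simp [integral_const_mul]
    show b < (((∫ ω, (fun _ : Ω => c) ω * y ω ∂P) - ρ (fun _ => c) : ℝ) : EReal)
    rw [hintc, hρc]
    have : c * ∫ ω, y ω ∂P - (ρ (fun _ => 0) - c) = c * d - ρ (fun _ => 0) := by
      rw [hd_def]; ring
    rw [this, hc_def, div_mul_cancel₀ _ hd]
    calc b < (r : EReal) := hbr
    _ ≤ _ := by
      apply EReal.coe_le_coe_iff.mpr; linarith
  · -- positive part has positive measure
    have hmy : Measurable y := hy.1
    set A : Set Ω := {ω | 0 < y ω} with hA_def
    have hAmeas : MeasurableSet A := measurableSet_lt measurable_const hmy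
    have hPA : 0 < P A := by
      rw [pos_iff_ne_zero]
      intro h
      apply hneg
      rw [ae_iff]
      convert h using 2
      ext ω; simp [hA_def, not_le]
    have hx0 : A.indicator (fun _ => (1:ℝ)) ∈ X := by
      refine hsolid _ (fun _ => 1) ((measurable_const).indicator hAmeas) (hconst 1) ?_
      filter_upwards with ω
      by_cases h : ω ∈ A <;> simp [h]
    have hyint : Integrable y P := by
      have := hy.2 (fun _ => 1) (hconst 1)
      simpa using this
    have hc : 0 < ∫ ω in A, y ω ∂P := by
      rw [setIntegral_pos_iff_support_of_nonneg_ae]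
      · refine lt_of_lt_of_le hPA (measure_mono ?_)
        intro ω hω
        exact ⟨ne_of_gt hω, hω⟩
      · rw [EventuallyLE, ae_restrict_iff' hAmeas]
        filter_upwards with ω hω using le_of_lt hω
      · exact hyint.integrableOn
    set c := ∫ ω in A, y ω ∂P with hc_def
    set t : ℝ := max 0 ((r + ρ (fun _ => 0) + 1) / c) with ht_def
    have ht0 : 0 ≤ t := le_max_left _ _
    set x : Ω → ℝ := fun ω => t * A.indicator (fun _ => (1:ℝ)) ω with hx_def
    have hxX : x ∈ X := hsmul t _ hx0
    refine ⟨_, ⟨x, hxX, rfl⟩, ?_⟩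
    have hxint : ∫ ω, x ω * y ω ∂P = t * c := by
      rw [hc_def, hx_def]
      simp only [mul_assoc]
      rw [integral_const_mul]
      congr 1
      rw [← integral_indicator hAmeas]
      congr 1
      ext ω
      by_cases h : ω ∈ A <;> simp [h]
    have hρx : ρ x ≤ ρ (fun _ => 0) := by
      refine hmono _ h0X _ hxX ?_
      filter_upwards with ω
      by_cases h : ω ∈ A <;> simp [hx_def, h, ht0]
    have htc : r + ρ (fun _ => 0) + 1 ≤ t * c := by
      rcases le_or_gt ((r + ρ (fun _ => 0) + 1) / c) 0 with h | h
      · have : r + ρ (fun _ => 0) + 1 ≤ 0 := by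
          by_contra hcon
          push_neg at hcon
          nlinarith [div_pos hcon hc]
        have ht' : t = 0 := by
          rw [ht_def, max_eq_left h]
        rw [ht']; linarith
      · have ht' : t = (r + ρ (fun _ => 0) + 1) / c := by
          rw [ht_def, max_eq_right (le_of_lt h)]
        rw [ht', div_mul_cancel₀ _ (ne_of_gt hc)]
    show b < (((∫ ω, x ω * y ω ∂P) - ρ x : ℝ) : EReal)
    rw [hxint]
    calc b < (r : EReal) := hbr
    _ ≤ _ := by
      apply EReal.coe_le_coe_iff.mpr; linarith

lemma sSup_restrict [MeasurableSpace Ω]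
    (P : Measure Ω) [IsProbabilityMeasure P] (X : Set (Ω → ℝ)) (hX : IsModelSpace P X)
    (ρ : (Ω → ℝ) → ℝ) (hρ : IsConvexRiskMeasure P X ρ) (x : Ω → ℝ) :
    sSup ((fun y => (((∫ ω, x ω * y ω ∂P : ℝ)) : EReal) - fenchel P X ρ y) ''
        (kotheDual P X)) =
    sSup ((fun y => (((∫ ω, x ω * y ω ∂P : ℝ)) : EReal) - fenchel P X ρ y) ''
        {y | y ∈ kotheDual P X ∧ (∀ᵐ ω ∂P, y ω ≤ 0) ∧ ∫ ω, y ω ∂P = -1}) := by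
  apply le_antisymm
  · apply sSup_le
    rintro a ⟨y, hy, rfl⟩
    by_cases h : (∀ᵐ ω ∂P, y ω ≤ 0) ∧ ∫ ω, y ω ∂P = -1
    · exact le_sSup ⟨y, ⟨hy, h.1, h.2⟩, rfl⟩
    · simp only [fenchel_eq_top_of_not_prob P X hX ρ hρ y hy h, EReal.sub_top]
      exact bot_le
  · apply sSup_le_sSup
    exact Set.image_mono (fun y hy => hy.1)

/-- `ρ` is representable iff it is representable over the dual variables
`y ∈ 𝓧^#` with `y ≤ 0` a.s. and `E[y] = -1`. -/
theorem representable_iff_representable_over_probabilities [MeasurableSpace Ω]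
    (P : Measure Ω) [IsProbabilityMeasure P] (X : Set (Ω → ℝ)) (hX : IsModelSpace P X)
    (ρ : (Ω → ℝ) → ℝ) (hρ : IsConvexRiskMeasure P X ρ) :
    IsRepresentableOver P X ρ (kotheDual P X) ↔
      IsRepresentableOver P X ρ
        {y | y ∈ kotheDual P X ∧ (∀ᵐ ω ∂P, y ω ≤ 0) ∧ ∫ ω, y ω ∂P = -1} := by
  constructor
  · intro h x hx
    rw [h x hx]
    exact sSup_restrict P X hX ρ hρ x
  · intro h x hx
    rw [h x hx]
    exact (sSup_restrict P X hX ρ hρ x).symm
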